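/- Let x ∈ (0,1), let L_k = (k+1)(k+2) for k ∈ ℕ, and define η_k(x) = 1/((k+1)(1+(k+1)√x)). Then for every k ∈ ℕ the recursion η_k(x) = (η_{k+1}(x) + 1/L_k)/(1 + x·L_k·η_{k+1}(x)) holds; moreover η_0(x) = 1/(1+√x) and η_0′(x) = −1/(2√x(1+√x)²). -/

import Mathlib

/-- The solvable transient multigraph with `L_k = (k+1)(k+2)`:
`η_k(x) = 1/((k+1)(1+(k+1)√x))` satisfies the recursion
`η_k = (η_{k+1} + 1/L_k)/(1 + x L_k η_{k+1})`, and `η_0(x) = 1/(1+√x)` with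
`η_0'(x) = -1/(2√x (1+√x)²)`. -/
theorem stmt_2 (x : ℝ) (hx : x ∈ Set.Ioo (0:ℝ) 1)
    (L : ℕ → ℝ) (hL : ∀ k : ℕ, L k = ((k:ℝ) + 1) * ((k:ℝ) + 2))
    (η : ℕ → ℝ → ℝ)
    (hη : ∀ (k : ℕ) (y : ℝ), η k y = 1 / (((k:ℝ) + 1) * (1 + ((k:ℝ) + 1) * Real.sqrt y))) :
    (∀ k : ℕ, η k x = (η (k+1) x + 1 / L k) / (1 + x * L k * η (k+1) x)) ∧
    η 0 x = 1 / (1 + Real.sqrt x) ∧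
    HasDerivAt (η 0) (-(1 / (2 * Real.sqrt x * (1 + Real.sqrt x)^2))) x := by
  obtain ⟨hx0, hx1⟩ := hx
  set s := Real.sqrt x with hs
  have hs0 : 0 < s := Real.sqrt_pos.mpr hx0
  have hsq : s * s = x := Real.mul_self_sqrt hx0.le
  refine ⟨?_, ?_, ?_⟩
  · intro k
    have hk1 : (0:ℝ) < (k:ℝ) + 1 := by positivity
    have hk2 : (0:ℝ) < (k:ℝ) + 2 := by positivity
    have hd1 : (0:ℝ) < 1 + ((k:ℝ) + 1) * s := by positivity
    have hd2 : (0:ℝ) < 1 + ((k:ℝ) + 2) * s := by positivity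
    rw [hη k x, hη (k+1) x, hL k]
    push_cast
    rw [← hs]
    have hden : 1 + x * ((↑k + 1) * (↑k + 2)) *
        (1 / ((↑k + 1 + 1) * (1 + (↑k + 1 + 1) * s))) > 0 := by positivity
    rw [div_eq_div_iff (by positivity) (by positivity)]
    field_simp
    rw [← hsq]; ring
  · rw [hη 0 x]; norm_num; exact hs.symm
  · have heq : η 0 = fun y => 1 / (1 + Real.sqrt y) := by
      funext y; rw [hη 0 y]; norm_num
    rw [heq]
    have h1 : HasDerivAt (fun y => 1 + Real.sqrt y) (1 / (2 * s)) x := by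
      simpa using (Real.hasDerivAt_sqrt hx0.ne').const_add 1
    have h2 := h1.inv (by positivity : (1:ℝ) + s ≠ 0)
    have : -(1 / (2 * s)) / (1 + s) ^ 2 = -(1 / (2 * s * (1 + s) ^ 2)) := by
      field_simp
    rw [← this]
    simpa [one_div, ← hs, Pi.inv_def] using h2
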